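/- A bicomplex matrix A = A₁ + jA₂ ∈ 𝔹ℂ^{n×n} is hyperbolic positive if and only if A₁ is a positive semidefinite complex matrix, A₂ is skew self-adjoint (A₂ + conj(A₂)ᵗ = 0), and −A₁ ⪯ iA₂ ⪯ A₁ in the Loewner order, i.e. both A₁ − iA₂ and A₁ + iA₂ are positive semidefinite complex matrices. -/

import Mathlib

open Complex Matrix Kronecker BigOperators

open scoped ComplexOrder

/-- Bicomplex numbers, modeled as pairs `(z₁, z₂) ∈ ℂ × ℂ` representing `z₁ + j z₂`.
Addition is the componentwise (Prod) addition. -/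
abbrev BC : Type := ℂ × ℂ

noncomputable section

/-- Bicomplex multiplication: `(z₁,z₂)·(w₁,w₂) = (z₁w₁ − z₂w₂, z₁w₂ + z₂w₁)`. -/
def bcMul (z w : BC) : BC := (z.1 * w.1 - z.2 * w.2, z.1 * w.2 + z.2 * w.1)

/-- The `*`-conjugate `Z* = conj z₁ − j conj z₂`. -/
def bcStar (z : BC) : BC := ((starRingEnd ℂ) z.1, -((starRingEnd ℂ) z.2))

/-- First idempotent component `λ₁ = z₁ − i z₂`. -/
def idem1 (z : BC) : ℂ := z.1 - Complex.I * z.2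

/-- Second idempotent component `λ₂ = z₁ + i z₂`. -/
def idem2 (z : BC) : ℂ := z.1 + Complex.I * z.2

/-- Membership in `𝔻⁺`: both idempotent components are nonnegative real numbers. -/
def inDplus (z : BC) : Prop :=
  (idem1 z).im = 0 ∧ 0 ≤ (idem1 z).re ∧ (idem2 z).im = 0 ∧ 0 ≤ (idem2 z).re

/-- A bicomplex matrix `A = A₁ + j A₂` is a pair of complex matrices. -/
abbrev BCMat (I J : Type) : Type := Matrix I J ℂ × Matrix I J ℂ

/-- Bicomplex matrix multiplication, induced by bicomplex multiplication. -/
def bmul {I J K : Type} [Fintype J] (A : BCMat I J) (B : BCMat J K) : BCMat I K :=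
  (A.1 * B.1 - A.2 * B.2, A.1 * B.2 + A.2 * B.1)

/-- `(A*)ᵗ`: the entrywise `*`-conjugate followed by transpose. -/
def bcStarT {I J : Type} (A : BCMat I J) : BCMat J I := (A.1ᴴ, -(A.2ᴴ))

/-- The `(j,k)` entry of a bicomplex matrix, as a bicomplex number. -/
def bcEntry {I J : Type} (A : BCMat I J) (j : I) (k : J) : BC := (A.1 j k, A.2 j k)

/-- First idempotent component `𝒜₁ = A₁ − i A₂` of a bicomplex matrix. -/
def midem1 {I J : Type} (A : BCMat I J) : Matrix I J ℂ := A.1 - Complex.I • A.2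

/-- Second idempotent component `𝒜₂ = A₁ + i A₂` of a bicomplex matrix. -/
def midem2 {I J : Type} (A : BCMat I J) : Matrix I J ℂ := A.1 + Complex.I • A.2

/-- The bicomplex number `(c*)ᵗ · A · c`. -/
def quadForm {I : Type} [Fintype I] (A : BCMat I I) (c : I → BC) : BC :=
  ∑ j, ∑ k, bcMul (bcStar (c j)) (bcMul (bcEntry A j k) (c k))

/-- `A` is hyperbolic positive if `(c*)ᵗ · A · c ∈ 𝔻⁺` for every bicomplex vector `c`. -/
def HypPos {I : Type} [Fintype I] (A : BCMat I I) : Prop :=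
  ∀ c : I → BC, inDplus (quadForm A c)

/-- Bicomplex trace `Tr(A) = Tr(A₁) + j Tr(A₂)`. -/
def bcTrace {I : Type} [Fintype I] (A : BCMat I I) : BC := (A.1.trace, A.2.trace)

/-- The bicomplex tensor product
`A ⊗ⱼ B = (A₁⊗B₁ − A₂⊗B₂) + j (A₁⊗B₂ + A₂⊗B₁)`. -/
def bkron {I J K L : Type} (A : BCMat I J) (B : BCMat K L) : BCMat (I × K) (J × L) :=
  (A.1 ⊗ₖ B.1 - A.2 ⊗ₖ B.2, A.1 ⊗ₖ B.2 + A.2 ⊗ₖ B.1)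

end

noncomputable section


section Aux

open Matrix

lemma idem1_bcMul (z w : BC) : idem1 (bcMul z w) = idem1 z * idem1 w := by
  simp only [idem1, bcMul]
  linear_combination (-(z.2*w.2)) * Complex.I_sq

lemma idem2_bcMul (z w : BC) : idem2 (bcMul z w) = idem2 z * idem2 w := by
  simp only [idem2, bcMul]
  linear_combination (-(z.2*w.2)) * Complex.I_sq

lemma idem1_bcStar (z : BC) : idem1 (bcStar z) = (starRingEnd ℂ) (idem1 z) := by
  simp [idem1, bcStar, map_sub, _root_.map_mul, Complex.conj_I]

lemma idem2_bcStar (z : BC) : idem2 (bcStar z) = (starRingEnd ℂ) (idem2 z) := by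
  simp [idem2, bcStar, map_add, _root_.map_mul, Complex.conj_I]

lemma idem1_sum {ι : Type*} (s : Finset ι) (f : ι → BC) :
    idem1 (∑ i ∈ s, f i) = ∑ i ∈ s, idem1 (f i) := by
  simp [idem1, Prod.fst_sum, Prod.snd_sum, Finset.mul_sum, Finset.sum_sub_distrib]

lemma idem2_sum {ι : Type*} (s : Finset ι) (f : ι → BC) :
    idem2 (∑ i ∈ s, f i) = ∑ i ∈ s, idem2 (f i) := by
  simp [idem2, Prod.fst_sum, Prod.snd_sum, Finset.mul_sum, Finset.sum_add_distrib]

lemma quad_idem1 {n : ℕ} (A : BCMat (Fin n) (Fin n)) (c : Fin n → BC) :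
    idem1 (quadForm A c) =
      dotProduct (star fun j => idem1 (c j)) ((midem1 A) *ᵥ fun j => idem1 (c j)) := by
  rw [quadForm, idem1_sum]
  simp only [idem1_sum, idem1_bcMul, idem1_bcStar]
  simp [dotProduct, Matrix.mulVec, midem1, Finset.mul_sum, bcEntry, idem1,
    Matrix.sub_apply, Matrix.smul_apply, smul_eq_mul, Pi.star_apply, Complex.star_def,
    mul_assoc]

lemma quad_idem2 {n : ℕ} (A : BCMat (Fin n) (Fin n)) (c : Fin n → BC) :
    idem2 (quadForm A c) =
      dotProduct (star fun j => idem2 (c j)) ((midem2 A) *ᵥ fun j => idem2 (c j)) := by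
  rw [quadForm, idem2_sum]
  simp only [idem2_sum, idem2_bcMul, idem2_bcStar]
  simp [dotProduct, Matrix.mulVec, midem2, Finset.mul_sum, bcEntry, idem2,
    Matrix.add_apply, Matrix.smul_apply, smul_eq_mul, Pi.star_apply, Complex.star_def,
    mul_assoc]

lemma inDplus_iff (z : BC) : inDplus z ↔ 0 ≤ idem1 z ∧ 0 ≤ idem2 z := by
  rw [inDplus, Complex.le_def, Complex.le_def]
  simp only [Complex.zero_re, Complex.zero_im]
  tauto

lemma posSemidef_of_quad {m : Type} [Fintype m] [DecidableEq m] (M : Matrix m m ℂ)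
    (h : ∀ x : m → ℂ, 0 ≤ dotProduct (star x) (M *ᵥ x)) : M.PosSemidef := by
  refine posSemidef_iff_dotProduct_mulVec.mpr ⟨?_, h⟩
  rw [Matrix.isHermitian_iff_isSymmetric, LinearMap.isSymmetric_iff_inner_map_self_real]
  rw [(WithLp.equiv 2 (m → ℂ)).symm.surjective.forall]
  intro x
  have hq := h x
  have him : (dotProduct (star x) (M *ᵥ x)).im = 0 := ((Complex.le_def.mp hq).2).symm
  have hhc : (starRingEnd ℂ) (dotProduct (star x) (M *ᵥ x))
      = dotProduct (star x) (M *ᵥ x) := Complex.conj_eq_iff_im.mpr him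
  have key : (inner ℂ ((Matrix.toEuclideanLin M) ((WithLp.equiv 2 (m → ℂ)).symm x))
      ((WithLp.equiv 2 (m → ℂ)).symm x) : ℂ)
      = (starRingEnd ℂ) (dotProduct (star x) (M *ᵥ x)) := by
    change dotProduct x (star (M *ᵥ x)) = _
    simp [dotProduct, map_sum, _root_.map_mul, Pi.star_apply, Complex.star_def, mul_comm]
  rw [key, hhc, hhc]

lemma exists_c {n : ℕ} (x y : Fin n → ℂ) :
    ∃ c : Fin n → BC, (fun j => idem1 (c j)) = x ∧ (fun j => idem2 (c j)) = y := by
  refine ⟨fun j => ((x j + y j)/2, (Complex.I * (x j - y j))/2), ?_, ?_⟩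
  · funext j; simp only [idem1]
    linear_combination (-((x j - y j))/2) * Complex.I_sq
  · funext j; simp only [idem2]
    linear_combination ((x j - y j)/2) * Complex.I_sq

lemma hypPos_iff_idem {n : ℕ} (A : BCMat (Fin n) (Fin n)) :
    HypPos A ↔ (midem1 A).PosSemidef ∧ (midem2 A).PosSemidef := by
  constructor
  · intro h
    constructor
    · apply posSemidef_of_quad
      intro x
      obtain ⟨c, hc1, -⟩ := exists_c x 0
      have := ((inDplus_iff _).mp (h c)).1
      rwa [quad_idem1, hc1] at this
    · apply posSemidef_of_quad
      intro x
      obtain ⟨c, -, hc2⟩ := exists_c 0 x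
      have := ((inDplus_iff _).mp (h c)).2
      rwa [quad_idem2, hc2] at this
  · rintro ⟨h1, h2⟩ c
    rw [inDplus_iff, quad_idem1, quad_idem2]
    exact ⟨h1.dotProduct_mulVec_nonneg _, h2.dotProduct_mulVec_nonneg _⟩

lemma two_inv_nonneg : (0 : ℂ) ≤ (2 : ℂ)⁻¹ := by
  rw [Complex.le_def]; norm_num

end Aux

/-- `A = A₁ + jA₂` is hyperbolic positive iff `A₁` is positive
semidefinite, `A₂` is skew self-adjoint, and `−A₁ ⪯ iA₂ ⪯ A₁`, i.e. both
`A₁ − iA₂` and `A₁ + iA₂` are positive semidefinite. -/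


theorem hypPos_iff_parts {n : ℕ} (A : BCMat (Fin n) (Fin n)) :
    HypPos A ↔
      (A.1).PosSemidef ∧ A.2 + (A.2)ᴴ = 0 ∧
        (A.1 - Complex.I • A.2).PosSemidef ∧ (A.1 + Complex.I • A.2).PosSemidef := by

  rw [hypPos_iff_idem]
  constructor
  · rintro ⟨h1, h2⟩
    have e1 : (A.1 - Complex.I • A.2)ᴴ = A.1 - Complex.I • A.2 := h1.1
    have e2 : (A.1 + Complex.I • A.2)ᴴ = A.1 + Complex.I • A.2 := h2.1
    refine ⟨PosSemidef.of_dotProduct_mulVec_nonneg ?_ ?_, ?_, h1, h2⟩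
    · ext i j
      have p1 := Matrix.ext_iff.mpr e1 i j
      have p2 := Matrix.ext_iff.mpr e2 i j
      simp only [Matrix.conjTranspose_apply, Matrix.sub_apply, Matrix.add_apply,
        Matrix.smul_apply, smul_eq_mul, Complex.star_def, map_sub, map_add, _root_.map_mul,
        Complex.conj_I] at p1 p2 ⊢
      linear_combination (p1 + p2)/2
    · intro x
      have q1 := h1.dotProduct_mulVec_nonneg x
      have q2 := h2.dotProduct_mulVec_nonneg x
      have heq : dotProduct (star x) (A.1 *ᵥ x)
          = (2:ℂ)⁻¹ * (dotProduct (star x) (midem1 A *ᵥ x)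
            + dotProduct (star x) (midem2 A *ᵥ x)) := by
        rw [← dotProduct_add, ← Matrix.add_mulVec]
        have hM : midem1 A + midem2 A = (2:ℂ) • A.1 := by
          ext i j
          simp [midem1, midem2, Matrix.add_apply, Matrix.sub_apply, Matrix.smul_apply]
          ring
        rw [hM, Matrix.smul_mulVec, dotProduct_smul, smul_eq_mul]
        ring
      rw [heq]
      exact mul_nonneg two_inv_nonneg (add_nonneg q1 q2)
    · ext i j
      have p1 := Matrix.ext_iff.mpr e1 i j
      have p2 := Matrix.ext_iff.mpr e2 i j
      simp only [Matrix.conjTranspose_apply, Matrix.sub_apply, Matrix.add_apply,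
        Matrix.smul_apply, smul_eq_mul, Complex.star_def, map_sub, map_add, _root_.map_mul,
        Complex.conj_I, Matrix.zero_apply] at p1 p2 ⊢
      linear_combination (-(Complex.I)/2) * p1 + (Complex.I/2) * p2 + (A.2 i j + (starRingEnd ℂ) (A.2 j i)) * Complex.I_sq
  · rintro ⟨-, -, h1, h2⟩
    exact ⟨h1, h2⟩


end
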